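/- Let 𝔯 be a totally real subspace of E, let T ∈ 𝔯, let W ∈ E be orthogonal to ℂ𝔯 = 𝔯 + J𝔯, and let b, y ∈ ℝ. Then for every S ∈ 𝔯 one has exp(ad(bB+JT+W+yZ))(S) = e^{b/2}S − e^{b/2}ρ(b/2)⟨T,S⟩Z; consequently, exp(ad(bB+JT+W+yZ))(𝔯) = (𝔯 ⊖ ℝT) ⊕ ℝ(T − ρ(b/2)‖T‖²Z). -/

import Mathlib

open scoped RealInnerProductSpace

noncomputable section

namespace CHn

/-- `E n` is `ℂ^{n-1}`, viewed as a real inner product space with `⟪U,V⟫ = Re⟪U,V⟫_ℂ`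
and complex structure `JU = iU`. -/
abbrev E (n : ℕ) := EuclideanSpace ℂ (Fin (n - 1))

/-- The solvable part `𝔰 = 𝔞 ⊕ 𝔫` of the Iwasawa decomposition of `𝔰𝔲(1,n)`, modeled as
`ℝB ⊕ E ⊕ ℝZ`; the element `(a, U, x)` represents `aB + U + xZ`. -/
abbrev S (n : ℕ) := ℝ × E n × ℝ

variable (n : ℕ)

/-- The vector `B`. -/
def B : S n := (1, 0, 0)

/-- The vector `Z`. -/
def Z : S n := (0, 0, 1)

/-- The inner product of `𝔰` (`B`, `Z` unit, orthogonal direct sum `ℝB ⊕ E ⊕ ℝZ`). -/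
def sInner (X Y : S n) : ℝ := X.1 * Y.1 + ⟪X.2.1, Y.2.1⟫ + X.2.2 * Y.2.2

/-- The ambient complex structure on `𝔰`: `J(aB + U + xZ) = -xB + JU + aZ`. -/
def Js : S n →ₗ[ℝ] S n where
  toFun X := (-X.2.2, Complex.I • X.2.1, X.1)
  map_add' X Y := by
    refine Prod.ext ?_ (Prod.ext ?_ ?_)
    · simp; ring
    · simp [smul_add]
    · simp
  map_smul' c X := by
    refine Prod.ext ?_ (Prod.ext ?_ ?_)
    · simp only [Prod.smul_fst, Prod.smul_snd, smul_eq_mul, RingHom.id_apply]; ring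
    · simp [Prod.smul_fst, Prod.smul_snd, smul_comm c Complex.I]
    · simp

/-- The Lie bracket of `𝔰`:
`[aB + U + xZ, bB + V + yZ] = (1/2)(aV - bU) + (ay - bx + ⟪JU, V⟫)Z`. -/
def bra (X Y : S n) : S n :=
  (0, (2⁻¹ : ℝ) • (X.1 • Y.2.1 - Y.1 • X.2.1),
    X.1 * Y.2.2 - Y.1 * X.2.2 + ⟪Complex.I • X.2.1, Y.2.1⟫)

/-- `ad(X) = [X, ·]`, a (continuous) linear endomorphism of `𝔰`. -/
def ad (X : S n) : S n →L[ℝ] S n :=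
  LinearMap.toContinuousLinearMap
    { toFun := bra n X
      map_add' := fun Y Y' => by
        unfold bra
        refine Prod.ext ?_ (Prod.ext ?_ ?_)
        · simp
        · simp only [Prod.fst_add, Prod.snd_add]
          module
        · simp only [Prod.fst_add, Prod.snd_add, inner_add_right]
          ring
      map_smul' := fun c Y => by
        unfold bra
        have h : ⟪Complex.I • X.2.1, c • Y.2.1⟫ = c * ⟪Complex.I • X.2.1, Y.2.1⟫ :=
          real_inner_smul_right _ _ _
        refine Prod.ext ?_ (Prod.ext ?_ ?_)
        · simp
        · simp only [Prod.smul_fst, Prod.smul_snd, smul_eq_mul, RingHom.id_apply]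
          module
        · simp only [Prod.smul_fst, Prod.smul_snd, smul_eq_mul, h, RingHom.id_apply]
          ring }

/-- `exp(ad(X)) = Σ_{k ≥ 0} ad(X)^k / k!`. -/
def expAd (X : S n) : S n →L[ℝ] S n := NormedSpace.exp (ad n X)

/-- `ρ(t) = (e^t - 1)/t` for `t ≠ 0`, `ρ(0) = 1`. -/
def rho (t : ℝ) : ℝ := if t = 0 then 1 else (Real.exp t - 1) / t

/-- The Iwasawa group `AN`, modeled as `G = ℝ × E × ℝ`. -/
abbrev G (n : ℕ) := ℝ × E n × ℝ

/-- The product of `G`: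
`(a,P,p)·(b,Q,q) = (a+b, P + e^{a/2}Q, p + e^a q + (1/2)e^{a/2}⟪JP,Q⟫)`. -/
def gmul (g h : G n) : G n :=
  (g.1 + h.1, g.2.1 + Real.exp (g.1 / 2) • h.2.1,
    g.2.2 + Real.exp g.1 * h.2.2 + 2⁻¹ * Real.exp (g.1 / 2) * ⟪Complex.I • g.2.1, h.2.1⟫)

/-- The Lie exponential `Exp : 𝔰 → G`, `Exp(cB + W + zZ) = (c, ρ(c/2)W, ρ(c)z)`. -/
def Exp (X : S n) : G n := (X.1, rho (X.1 / 2) • X.2.1, rho X.1 * X.2.2)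

/-- The inclusion of `E` into `𝔰`. -/
def inE : E n →ₗ[ℝ] S n where
  toFun U := (0, U, 0)
  map_add' U V := by refine Prod.ext ?_ (Prod.ext ?_ ?_) <;> simp
  map_smul' c U := by refine Prod.ext ?_ (Prod.ext ?_ ?_) <;> simp

/-- A real subspace of `E` is totally real if `⟪Ju, v⟫ = 0` for all its elements. -/
def TotallyRealE (V : Submodule ℝ (E n)) : Prop :=
  ∀ u ∈ V, ∀ v ∈ V, ⟪Complex.I • u, v⟫ = 0

/-- A real subspace of `E` is complex if it is `J`-invariant. -/
def IsComplexE (V : Submodule ℝ (E n)) : Prop :=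
  ∀ u ∈ V, Complex.I • u ∈ V

/-- The maximal complex subspace `V ∩ JV` of a real subspace `V` of `E`. -/
def maxCE (V : Submodule ℝ (E n)) : Set (E n) := {w | w ∈ V ∧ Complex.I • w ∈ V}

/-- `V` is a CR subspace of `E` if the orthogonal complement in `V` of its maximal
complex subspace `V ∩ JV` is totally real. -/
def IsCRE (V : Submodule ℝ (E n)) : Prop :=
  ∀ u ∈ V, ∀ v ∈ V, (∀ w ∈ maxCE n V, ⟪u, w⟫ = 0) →
    (∀ w ∈ maxCE n V, ⟪v, w⟫ = 0) → ⟪Complex.I • u, v⟫ = 0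

/-- A subset of `𝔰` is totally real if `⟪Ju, v⟫ = 0` for all its elements. -/
def TotallyRealS (V : Set (S n)) : Prop := ∀ u ∈ V, ∀ v ∈ V, sInner n (Js n u) v = 0

/-- The maximal complex subspace `V ∩ JV` of a real subspace `V` of `𝔰`. -/
def maxCS (V : Set (S n)) : Set (S n) := {x | x ∈ V ∧ Js n x ∈ V}

/-- `V` is a CR subspace of `𝔰` if the orthogonal complement in `V` of its maximal
complex subspace `V ∩ JV` is totally real. -/
def IsCRS (V : Set (S n)) : Prop :=
  ∀ u ∈ V, ∀ v ∈ V, (∀ w ∈ maxCS n V, sInner n u w = 0) →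
    (∀ w ∈ maxCS n V, sInner n v w = 0) → sInner n (Js n u) v = 0



section ExpAux

variable {M : Type*} [NormedAddCommGroup M] [NormedSpace ℝ M] [CompleteSpace M]

lemma exp_clm_apply (A : M →L[ℝ] M) (v : M) :
    NormedSpace.exp A v = ∑' k : ℕ, ((Nat.factorial k : ℝ))⁻¹ • (A ^ k) v := by
  rw [NormedSpace.exp_eq_tsum ℝ]
  have hs : Summable fun k : ℕ => ((Nat.factorial k : ℝ))⁻¹ • A ^ k :=
    NormedSpace.expSeries_summable' A
  have := (ContinuousLinearMap.apply ℝ M v).map_tsum hs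
  simpa using this

lemma exp_clm_eigen (A : M →L[ℝ] M) (v : M) (lam : ℝ) (h : A v = lam • v) :
    NormedSpace.exp A v = Real.exp lam • v := by
  have hp : ∀ k : ℕ, (A ^ k) v = lam ^ k • v := by
    intro k
    induction k with
    | zero => simp
    | succ k ih =>
      rw [pow_succ', ContinuousLinearMap.mul_apply, ih, map_smul, h, smul_smul, ← pow_succ]
  rw [exp_clm_apply]
  have hs : Summable fun k : ℕ => ((Nat.factorial k : ℝ))⁻¹ * lam ^ k := by
    simpa [smul_eq_mul] using NormedSpace.expSeries_summable' (𝕂 := ℝ) lam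
  calc ∑' k : ℕ, ((Nat.factorial k : ℝ))⁻¹ • (A ^ k) v
      = ∑' k : ℕ, (((Nat.factorial k : ℝ))⁻¹ * lam ^ k) • v := by simp [hp, smul_smul]
    _ = (∑' k : ℕ, ((Nat.factorial k : ℝ))⁻¹ * lam ^ k) • v := by rw [hs.tsum_smul_const]
    _ = Real.exp lam • v := by
        congr 1
        rw [Real.exp_eq_exp_ℝ, NormedSpace.exp_eq_tsum ℝ]
        simp [smul_eq_mul]

lemma exp_clm_nilp2 (A : M →L[ℝ] M) (v : M) (h : A (A v) = 0) :
    NormedSpace.exp A v = v + A v := by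
  have hp : ∀ k : ℕ, 2 ≤ k → (A ^ k) v = 0 := by
    intro k hk
    induction k with
    | zero => omega
    | succ k ih =>
      rcases Nat.lt_or_ge k 2 with hk2 | hk2
      · interval_cases k
        · omega
        · simpa [pow_succ', ContinuousLinearMap.mul_apply, pow_one] using h
      · rw [pow_succ', ContinuousLinearMap.mul_apply, ih hk2, map_zero]
  rw [exp_clm_apply]
  rw [tsum_eq_sum (s := {0, 1}) (by
    intro k hk
    have : 2 ≤ k := by simp at hk; omega
    simp [hp k this])]
  simp [Nat.factorial]

end ExpAux

lemma inner_I_smul_left' (n : ℕ) (U V : E n) :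
    ⟪Complex.I • U, V⟫ = -⟪U, Complex.I • V⟫ := by
  simp only [PiLp.inner_apply, PiLp.smul_apply, smul_eq_mul, Complex.inner, map_mul,
    Complex.conj_I]
  rw [← Finset.sum_neg_distrib]
  refine Finset.sum_congr rfl fun i _ => ?_
  simp [Complex.mul_re, Complex.mul_im]
  ring

lemma ad_Z' (n : ℕ) (X : S n) : ad n X ((0, 0, 1) : S n) = X.1 • ((0, 0, 1) : S n) := by
  show bra n X _ = _
  unfold bra
  refine Prod.ext ?_ (Prod.ext ?_ ?_) <;> simp

lemma ad_special (n : ℕ) (b y : ℝ) (T W Sv : E n) (hWS : ⟪W, Complex.I • Sv⟫ = 0) :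
    ad n ((b, Complex.I • T + W, y) : S n) ((0, Sv, 0) : S n)
      = ((0, (b / 2) • Sv, -⟪T, Sv⟫) : S n) := by
  show bra n _ _ = _
  unfold bra
  refine Prod.ext ?_ (Prod.ext ?_ ?_)
  · simp
  · show (2⁻¹ : ℝ) • (b • Sv - (0 : ℝ) • (Complex.I • T + W)) = (b / 2) • Sv
    rw [zero_smul, sub_zero, smul_smul]
    congr 1
    ring
  · show b * 0 - 0 * y + ⟪Complex.I • (Complex.I • T + W), Sv⟫ = -⟪T, Sv⟫
    have h1 : Complex.I • (Complex.I • T + W) = -T + Complex.I • W := by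
      rw [smul_add, smul_smul, Complex.I_mul_I, neg_one_smul]
    rw [h1, inner_add_left, inner_neg_left, inner_I_smul_left' n W Sv, hWS]
    ring

lemma expAd_special (n : ℕ) (X : S n) (Sv : E n) (t : ℝ)
    (h : ad n X ((0, Sv, 0) : S n) = ((0, (X.1 / 2) • Sv, -t) : S n)) :
    expAd n X ((0, Sv, 0) : S n)
      = ((0, Real.exp (X.1 / 2) • Sv, -(Real.exp (X.1 / 2) * rho (X.1 / 2) * t)) : S n) := by
  have hZ := ad_Z' n X
  show NormedSpace.exp (ad n X) _ = _
  by_cases hb : X.1 = 0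
  · rw [hb] at h ⊢
    have hv : ad n X ((0, Sv, 0) : S n) = ((0, 0, -t) : S n) := by
      rw [h]; refine Prod.ext ?_ (Prod.ext ?_ ?_) <;> simp
    have hvZ : ((0, 0, -t) : S n) = (-t) • ((0, 0, 1) : S n) := by
      refine Prod.ext ?_ (Prod.ext ?_ ?_) <;> simp
    have h2 : ad n X (ad n X ((0, Sv, 0) : S n)) = 0 := by
      rw [hv, hvZ, map_smul, hZ, hb, zero_smul, smul_zero]
    rw [exp_clm_nilp2 _ _ h2, hv]
    refine Prod.ext ?_ (Prod.ext ?_ ?_) <;> simp [rho]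
  · set b := X.1 with hbdef
    have hb2 : b / 2 ≠ 0 := div_ne_zero hb two_ne_zero
    have hsplit : ((0, Sv, 0) : S n)
        = ((0, Sv, 2 * t / b) : S n) - (2 * t / b) • ((0, 0, 1) : S n) := by
      refine Prod.ext ?_ (Prod.ext ?_ ?_) <;> simp
    have hw : ad n X ((0, Sv, 2 * t / b) : S n) = (b / 2) • ((0, Sv, 2 * t / b) : S n) := by
      have h2 : ((0, Sv, 2 * t / b) : S n)
          = ((0, Sv, 0) : S n) + (2 * t / b) • ((0, 0, 1) : S n) := by
        refine Prod.ext ?_ (Prod.ext ?_ ?_) <;> simp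
      rw [h2, map_add, map_smul, h, hZ]
      refine Prod.ext ?_ (Prod.ext ?_ ?_)
      · simp
      · simp
      · simp only [Prod.snd_add, Prod.smul_snd, smul_eq_mul, Prod.fst_add, Prod.smul_fst]
        field_simp
        ring
    rw [hsplit, map_sub, map_smul, exp_clm_eigen _ _ _ hw, exp_clm_eigen _ _ _ hZ]
    refine Prod.ext ?_ (Prod.ext ?_ ?_)
    · simp
    · simp
    · simp only [Prod.snd_sub, Prod.smul_snd, smul_eq_mul, Prod.fst_sub, Prod.smul_fst]
      have hexp : Real.exp b = Real.exp (b / 2) * Real.exp (b / 2) := by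
        rw [← Real.exp_add]; norm_num
      rw [rho, if_neg hb2, hexp]
      field_simp
      ring


/-- for `𝔯` totally real, `T ∈ 𝔯`, `W ⟂ ℂ𝔯`, `b, y ∈ ℝ`:
`exp(ad(bB+JT+W+yZ))(S) = e^{b/2}S − e^{b/2}ρ(b/2)⟨T,S⟩Z` for all `S ∈ 𝔯`, and
`exp(ad(bB+JT+W+yZ))(𝔯) = (𝔯 ⊖ ℝT) ⊕ ℝ(T − ρ(b/2)‖T‖²Z)`. -/
theorem statement6 (n : ℕ) (hn : 2 ≤ n) (𝔯 : Submodule ℝ (E n)) (h𝔯 : TotallyRealE n 𝔯)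
    (T : E n) (hT : T ∈ 𝔯) (W : E n)
    (hW : ∀ u ∈ 𝔯, ⟪W, u⟫ = 0 ∧ ⟪W, Complex.I • u⟫ = 0) (b y : ℝ) :
    (∀ Sv ∈ 𝔯,
      expAd n ((b, Complex.I • T + W, y) : S n) ((0, Sv, 0) : S n) =
        ((0, Real.exp (b / 2) • Sv, -(Real.exp (b / 2) * rho (b / 2) * ⟪T, Sv⟫)) : S n)) ∧
    Submodule.map (expAd n ((b, Complex.I • T + W, y) : S n)).toLinearMap
        (Submodule.map (inE n) 𝔯) =
      Submodule.map (inE n) (𝔯 ⊓ (Submodule.span ℝ {T})ᗮ) ⊔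
        Submodule.span ℝ {((0, T, -(rho (b / 2) * ‖T‖ ^ 2)) : S n)} := by
  set X : S n := ((b, Complex.I • T + W, y) : S n) with hX
  have part1 : ∀ Sv ∈ 𝔯,
      expAd n X ((0, Sv, 0) : S n)
        = ((0, Real.exp (b / 2) • Sv,
            -(Real.exp (b / 2) * rho (b / 2) * ⟪T, Sv⟫)) : S n) := by
    intro Sv hSv
    exact expAd_special n X Sv (⟪T, Sv⟫) (ad_special n b y T W Sv (hW Sv hSv).2)
  refine ⟨part1, ?_⟩
  set e := Real.exp (b / 2) with he
  have hne : e ≠ 0 := (Real.exp_pos _).ne'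
  set c := rho (b / 2) with hc
  have hTT : ⟪T, T⟫ = ‖T‖ ^ 2 := real_inner_self_eq_norm_sq T
  apply le_antisymm
  · rintro x ⟨u, ⟨Sv, hSv, rfl⟩, rfl⟩
    have hx : (expAd n X).toLinearMap (inE n Sv)
        = ((0, e • Sv, -(e * c * ⟪T, Sv⟫)) : S n) := part1 Sv hSv
    rw [hx]
    set q := (⟪T, Sv⟫ : ℝ) / ‖T‖ ^ 2 with hq
    have hdiv : q * ‖T‖ ^ 2 = ⟪T, Sv⟫ := by
      by_cases hT0 : T = 0
      · subst hT0; simp [hq]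
      · have hn0 : ‖T‖ ^ 2 ≠ 0 := pow_ne_zero _ (norm_ne_zero_iff.mpr hT0)
        rw [hq, div_mul_cancel₀ _ hn0]
    have hS'mem : Sv - q • T ∈ 𝔯 ⊓ (Submodule.span ℝ {T})ᗮ := by
      refine Submodule.mem_inf.mpr ⟨sub_mem hSv (Submodule.smul_mem _ _ hT), ?_⟩
      rw [Submodule.mem_orthogonal_singleton_iff_inner_right]
      rw [inner_sub_right, real_inner_smul_right, hTT, hdiv, sub_self]
    have hrepr : ((0, e • Sv, -(e * c * ⟪T, Sv⟫)) : S n)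
        = inE n (e • (Sv - q • T)) + (e * q) • ((0, T, -(c * ‖T‖ ^ 2)) : S n) := by
      refine Prod.ext ?_ (Prod.ext ?_ ?_)
      · simp [inE]
      · show e • Sv = e • (Sv - q • T) + (e * q) • T
        rw [smul_sub, smul_smul]; abel
      · show -(e * c * ⟪T, Sv⟫) = 0 + (e * q) • (-(c * ‖T‖ ^ 2))
        rw [smul_eq_mul, ← hdiv]; ring
    rw [hrepr]
    exact Submodule.add_mem _
      (Submodule.mem_sup_left ⟨e • (Sv - q • T), Submodule.smul_mem _ _ hS'mem, rfl⟩)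
      (Submodule.mem_sup_right
        (Submodule.smul_mem _ _ (Submodule.mem_span_singleton_self _)))
  · apply sup_le
    · rintro x ⟨Sv, hSv, rfl⟩
      refine ⟨inE n (e⁻¹ • Sv), ⟨e⁻¹ • Sv, Submodule.smul_mem _ _ hSv.1, rfl⟩, ?_⟩
      have h0 : ⟪T, Sv⟫ = 0 :=
        Submodule.mem_orthogonal_singleton_iff_inner_right.mp hSv.2
      show expAd n X ((0, e⁻¹ • Sv, 0) : S n) = inE n Sv
      rw [part1 (e⁻¹ • Sv) (Submodule.smul_mem _ _ hSv.1)]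
      refine Prod.ext ?_ (Prod.ext ?_ ?_)
      · simp [inE]
      · show e • e⁻¹ • Sv = Sv
        rw [smul_smul, mul_inv_cancel₀ hne, one_smul]
      · show -(e * c * ⟪T, e⁻¹ • Sv⟫) = (0 : ℝ)
        rw [real_inner_smul_right, h0]; ring
    · rw [Submodule.span_le, Set.singleton_subset_iff]
      refine ⟨inE n (e⁻¹ • T), ⟨e⁻¹ • T, Submodule.smul_mem _ _ hT, rfl⟩, ?_⟩
      show expAd n X ((0, e⁻¹ • T, 0) : S n) = _
      rw [part1 (e⁻¹ • T) (Submodule.smul_mem _ _ hT)]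
      refine Prod.ext ?_ (Prod.ext ?_ ?_)
      · rfl
      · show e • e⁻¹ • T = T
        rw [smul_smul, mul_inv_cancel₀ hne, one_smul]
      · show -(e * c * ⟪T, e⁻¹ • T⟫) = -(c * ‖T‖ ^ 2)
        rw [real_inner_smul_right, hTT]
        field_simp


end CHn
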